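/- Let G and H be finitely generated groups that are two-sided configuration equivalent, and let n be a positive integer. Then the number of normal subgroups of index n in G equals the number of normal subgroups of index n in H. -/

import Mathlib

/-- `g` is an ordered generating tuple of `G`. -/
def Generates {G : Type*} [Group G] {n : ℕ} (g : Fin n → G) : Prop :=
  Subgroup.closure (Set.range g) = ⊤

/-- The two-sided configuration set of the configuration pair `(g, c)`: a two-sided
configuration is a tuple `(c₀, (c₁, …, c_n), (c_{n+1}, …, c_{2n}))` of colors realized by
some `x ∈ G`, i.e. `c x = c₀`, `c (gᵢ * x) = cᵢ` and `c (x * gᵢ) = c_{n+i}` for all `i`. -/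
def ConfigT {G : Type*} [Group G] {n m : ℕ} (g : Fin n → G) (c : G → Fin m) :
    Set (Fin m × (Fin n → Fin m) × (Fin n → Fin m)) :=
  { p | ∃ x : G, c x = p.1 ∧ (∀ i, c (g i * x) = p.2.1 i) ∧ (∀ i, c (x * g i) = p.2.2 i) }

/-- Two-sided configuration equivalence of groups. -/
def ConfigTEquiv (G H : Type*) [Group G] [Group H] : Prop :=
  (∀ (n m : ℕ) (g : Fin n → G) (c : G → Fin m), Generates g →
    ∃ (h : Fin n → H) (d : H → Fin m), Generates h ∧ ConfigT g c = ConfigT h d) ∧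
  (∀ (n m : ℕ) (h : Fin n → H) (d : H → Fin m), Generates h →
    ∃ (g : Fin n → G) (c : G → Fin m), Generates g ∧ ConfigT h d = ConfigT g c)

section Aux

/-- Normality instance for the subtype of normal subgroups of index `n`. -/
instance auxNormal {G : Type*} [Group G] {n : ℕ}
    (N : {N : Subgroup G // N.Normal ∧ N.index = n}) : N.1.Normal := N.2.1

/-- A finitely generated group has finitely many homomorphisms into a finite monoid. -/
theorem aux_finite_homs {G P : Type*} [Group G] [Group.FG G] [Monoid P] [Finite P] :
    Finite (G →* P) := by
  obtain ⟨S, hS, hfin⟩ := Group.fg_iff.mp ‹Group.FG G›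
  haveI : Finite S := hfin
  refine Finite.of_injective (fun f : G →* P => fun s : S => f s) ?_
  intro f g hfg
  exact MonoidHom.eq_of_eqOn_dense hS fun x hx => congrFun hfg ⟨x, hx⟩

/-- The left-regular representation of `G ⧸ N` transported to `Fin n`. -/
noncomputable def auxPerm {G : Type*} [Group G] {n : ℕ} (hn : 0 < n)
    (N : {N : Subgroup G // N.Normal ∧ N.index = n}) : G →* Equiv.Perm (Fin n) :=
  letI e : G ⧸ N.1 ≃ Fin n :=
    (Nat.equivFinOfCardPos (by
      rw [← Subgroup.index_eq_card, N.2.2]; exact hn.ne')).trans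
      (finCongr (by rw [← Subgroup.index_eq_card, N.2.2]))
  { toFun := fun x => (e.symm.trans (Equiv.mulLeft (QuotientGroup.mk x))).trans e
    map_one' := by
      ext i
      simp
    map_mul' := by
      intro a b
      ext i
      simp [mul_assoc] }

theorem auxPerm_mem {G : Type*} [Group G] {n : ℕ} (hn : 0 < n)
    (N M : {N : Subgroup G // N.Normal ∧ N.index = n})
    (h : auxPerm hn N = auxPerm hn M) {x : G} (hx : x ∈ N.1) : x ∈ M.1 := by
  have h1 : auxPerm hn N x = 1 := by
    ext i
    simp [auxPerm, (QuotientGroup.eq_one_iff x).mpr hx]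
  have h2 : auxPerm hn M x = 1 := by rw [← h]; exact h1
  classical
  set e : G ⧸ M.1 ≃ Fin n :=
    (Nat.equivFinOfCardPos (by
      rw [← Subgroup.index_eq_card, M.2.2]; exact hn.ne')).trans
      (finCongr (by rw [← Subgroup.index_eq_card, M.2.2])) with he
  have h4 : (auxPerm hn M x) (e (1 : G ⧸ M.1)) = e (1 : G ⧸ M.1) := by rw [h2]; rfl
  have h5 : e ((QuotientGroup.mk x : G ⧸ M.1) * e.symm (e 1)) = e 1 := h4
  rw [Equiv.symm_apply_apply, mul_one] at h5
  have := e.injective h5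
  exact (QuotientGroup.eq_one_iff x).mp this

/-- A finitely generated group has finitely many normal subgroups of index `n`. -/
theorem aux_finite_normal {G : Type*} [Group G] [Group.FG G] {n : ℕ} (hn : 0 < n) :
    Finite {N : Subgroup G // N.Normal ∧ N.index = n} := by
  haveI : Finite (G →* Equiv.Perm (Fin n)) := aux_finite_homs
  refine Finite.of_injective (auxPerm hn) ?_
  intro N M h
  refine Subtype.ext (le_antisymm (fun x hx => ?_) (fun x hx => ?_))
  · exact auxPerm_mem hn N M h hx
  · exact auxPerm_mem hn M N h.symm hx

/-- The key inequality: one direction of configuration equivalence bounds the number of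
normal subgroups of index `n`. -/
theorem aux_card_le {G H : Type*} [Group G] [Group H] [Group.FG G] [Group.FG H]
    (hdir : ∀ (k m : ℕ) (g : Fin k → G) (c : G → Fin m), Generates g →
      ∃ (h : Fin k → H) (d : H → Fin m), Generates h ∧ ConfigT g c = ConfigT h d)
    (n : ℕ) (hn : 0 < n) :
    Nat.card {N : Subgroup G // N.Normal ∧ N.index = n} ≤
      Nat.card {M : Subgroup H // M.Normal ∧ M.index = n} := by
  classical
  haveI finG := aux_finite_normal (G := G) hn
  haveI finH := aux_finite_normal (G := H) hn
  set ι := {N : Subgroup G // N.Normal ∧ N.index = n} with hι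
  haveI : ∀ N : ι, Finite (G ⧸ N.1) := by
    intro N
    refine Nat.finite_of_card_ne_zero ?_
    rw [← Subgroup.index_eq_card, N.2.2]
    exact hn.ne'
  -- the target finite group
  haveI : Finite (∀ N : ι, G ⧸ N.1) := by infer_instance
  set Q := ∀ N : ι, G ⧸ N.1 with hQ
  -- diagonal homomorphism
  set φ : G →* Q := { toFun := fun x N => QuotientGroup.mk x
                      map_one' := rfl
                      map_mul' := fun a b => rfl } with hφ
  haveI : Nonempty Q := ⟨1⟩
  set m := Nat.card Q with hm
  have hm0 : Nat.card Q ≠ 0 := Nat.card_ne_zero.mpr ⟨‹Nonempty Q›, ‹Finite Q›⟩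
  set e : Q ≃ Fin m := Nat.equivFinOfCardPos hm0 with he
  set c : G → Fin m := fun x => e (φ x) with hc
  -- generating tuple
  obtain ⟨k, S, hScard, hSgen⟩ := Group.fg_iff'.mp ‹Group.FG G›
  set g : Fin S.card → G := fun i => (S.equivFin.symm i : G) with hg
  have hgrange : Set.range g = (S : Set G) := by
    ext x
    constructor
    · rintro ⟨i, rfl⟩; exact (S.equivFin.symm i).2
    · intro hx; exact ⟨S.equivFin ⟨x, hx⟩, by simp [hg]⟩
  have hgen : Generates g := by rw [Generates, hgrange]; exact hSgen
  obtain ⟨h, d, hhgen, hconf⟩ := hdir S.card m g c hgen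
  set ψ : H → Q := fun x => e.symm (d x) with hψ
  -- every configuration of (h, d) is realized in (g, c)
  have key : ∀ x : H, ∃ y : G, φ y = ψ x ∧ ∀ i, ψ (h i * x) = φ (g i) * ψ x := by
    intro x
    have hx : (⟨d x, fun i => d (h i * x), fun i => d (x * h i)⟩ :
        Fin m × (Fin S.card → Fin m) × (Fin S.card → Fin m)) ∈ ConfigT h d :=
      ⟨x, rfl, fun i => rfl, fun i => rfl⟩
    rw [← hconf] at hx
    obtain ⟨y, hy0, hy1, -⟩ := hx
    have hy0' : e (φ y) = d x := hy0
    have hy1' : ∀ i, e (φ (g i * y)) = d (h i * x) := hy1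
    have hyx : φ y = ψ x := by
      show φ y = e.symm (d x)
      rw [← hy0', Equiv.symm_apply_apply]
    refine ⟨y, hyx, fun i => ?_⟩
    show e.symm (d (h i * x)) = φ (g i) * ψ x
    rw [← hy1' i, Equiv.symm_apply_apply, map_mul, hyx]
  have surj : ∀ y : G, ∃ x : H, ψ x = φ y := by
    intro y
    have hy : (⟨c y, fun i => c (g i * y), fun i => c (y * g i)⟩ :
        Fin m × (Fin S.card → Fin m) × (Fin S.card → Fin m)) ∈ ConfigT g c :=
      ⟨y, rfl, fun i => rfl, fun i => rfl⟩
    rw [hconf] at hy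
    obtain ⟨x, hx0, -, -⟩ := hy
    have hx0' : d x = e (φ y) := hx0
    refine ⟨x, ?_⟩
    show e.symm (d x) = φ y
    rw [hx0', Equiv.symm_apply_apply]
  -- the set of elements acting consistently is a subgroup containing all generators
  have hcocycle : ∀ w x : H, ψ (w * x) = ψ w * (ψ 1)⁻¹ * ψ x := by
    have hsub : ∀ w ∈ Subgroup.closure (Set.range h),
        ∀ x : H, ψ (w * x) = ψ w * (ψ 1)⁻¹ * ψ x := by
      intro w hw
      induction hw using Subgroup.closure_induction with
      | mem w hw =>
        obtain ⟨i, rfl⟩ := hw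
        intro x
        obtain ⟨-, -, hkey⟩ := key x
        obtain ⟨-, -, hkey1⟩ := key 1
        have h1 : ψ (h i * x) = φ (g i) * ψ x := hkey i
        have h2 : ψ (h i) = φ (g i) * ψ 1 := by
          have := hkey1 i; rwa [mul_one] at this
        rw [h1, h2]
        rw [mul_inv_cancel_right]
      | one =>
        intro x
        rw [one_mul, mul_inv_cancel, one_mul]
      | mul w v _ _ hw hv =>
        intro x
        rw [mul_assoc, hw (v * x), hv x, hw v]
        group
      | inv w _ hw =>
        intro x
        have h1 : ψ (w * (w⁻¹ * x)) = ψ w * (ψ 1)⁻¹ * ψ (w⁻¹ * x) := hw (w⁻¹ * x)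
        rw [mul_inv_cancel_left] at h1
        have h2 : ψ (w⁻¹ * x) = ψ 1 * (ψ w)⁻¹ * ψ x := by
          rw [h1]; simp only [mul_assoc (G := Q), inv_mul_cancel_left (G := Q), mul_inv_cancel_left (G := Q)]
        have h3 : ψ (w⁻¹) = ψ 1 * (ψ w)⁻¹ * ψ 1 := by
          have h4 := hw w⁻¹
          rw [mul_inv_cancel] at h4
          have h5 : ψ 1 * (ψ w)⁻¹ * ψ 1 = ψ 1 * (ψ w)⁻¹ * (ψ w * (ψ 1)⁻¹ * ψ w⁻¹) := by
            rw [← h4]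
          rw [h5]; simp only [mul_assoc (G := Q), inv_mul_cancel_left (G := Q), mul_inv_cancel_left (G := Q)]
        rw [h2, h3]
        rw [mul_inv_cancel_right (G := Q)]
    intro w x
    exact hsub w (by rw [hhgen]; trivial) x
  -- the homomorphism f : H →* Q
  set f : H →* Q := { toFun := fun x => ψ x * (ψ 1)⁻¹
                      map_one' := mul_inv_cancel (G := Q) _
                      map_mul' := by
                        intro a b
                        show ψ (a * b) * (ψ 1)⁻¹ = ψ a * (ψ 1)⁻¹ * (ψ b * (ψ 1)⁻¹)
                        rw [hcocycle a b]
                        group } with hf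
  have hψrange : ∀ x : H, ψ x ∈ φ.range := fun x => (key x).elim fun y hy => ⟨y, hy.1⟩
  have hfrange : f.range = φ.range := by
    apply le_antisymm
    · rintro - ⟨x, rfl⟩
      obtain ⟨y1, hy1⟩ := hψrange x
      obtain ⟨y0, hy0⟩ := hψrange 1
      exact ⟨y1 * y0⁻¹, by simp only [hf, MonoidHom.coe_mk, OneHom.coe_mk, map_mul, map_inv,
        hy1, hy0]⟩
    · rintro - ⟨y, rfl⟩
      obtain ⟨y0, hy0⟩ := hψrange 1
      obtain ⟨x, hx⟩ := surj (y * y0)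
      refine ⟨x, ?_⟩
      show ψ x * (ψ 1)⁻¹ = φ y
      rw [hx, ← hy0, map_mul]
      rw [mul_inv_cancel_right]
  -- the injection on normal subgroups
  have hcomp : ∀ N : ι, (Pi.evalMonoidHom (fun N : ι => G ⧸ N.1) N).comp φ
      = QuotientGroup.mk' N.1 := fun N => MonoidHom.ext fun x => rfl
  set θ : ι → {M : Subgroup H // M.Normal ∧ M.index = n} := fun N =>
    ⟨((Pi.evalMonoidHom (fun N : ι => G ⧸ N.1) N).comp f).ker, by infer_instance, by
      rw [Subgroup.index_ker, MonoidHom.range_comp, hfrange, ← MonoidHom.range_comp,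
        hcomp N, MonoidHom.range_eq_top.mpr (QuotientGroup.mk'_surjective N.1),
        Subgroup.card_top, ← Subgroup.index_eq_card, N.2.2]⟩ with hθ
  have hinj : Function.Injective θ := by
    intro N M hNM
    have hker : ((Pi.evalMonoidHom (fun N : ι => G ⧸ N.1) N).comp f).ker
        = ((Pi.evalMonoidHom (fun N : ι => G ⧸ N.1) M).comp f).ker :=
      congrArg Subtype.val hNM
    have hmap : ∀ P : ι, Subgroup.map f ((Pi.evalMonoidHom (fun N : ι => G ⧸ N.1) P).comp f).ker
        = φ.range ⊓ (Pi.evalMonoidHom (fun N : ι => G ⧸ N.1) P).ker := by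
      intro P
      rw [← MonoidHom.comap_ker, Subgroup.map_comap_eq, hfrange]
    have h2 : φ.range ⊓ (Pi.evalMonoidHom (fun N : ι => G ⧸ N.1) N).ker
        = φ.range ⊓ (Pi.evalMonoidHom (fun N : ι => G ⧸ N.1) M).ker := by
      rw [← hmap N, ← hmap M, hker]
    have hcomap : ∀ P : ι, Subgroup.comap φ
        (φ.range ⊓ (Pi.evalMonoidHom (fun N : ι => G ⧸ N.1) P).ker) = P.1 := by
      intro P
      have hrr : Subgroup.comap φ (φ.range ⊓ (Pi.evalMonoidHom (fun N : ι => G ⧸ N.1) P).ker)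
          = Subgroup.comap φ (Pi.evalMonoidHom (fun N : ι => G ⧸ N.1) P).ker := by
        ext x
        simp only [Subgroup.mem_comap, Subgroup.mem_inf, MonoidHom.mem_range]
        exact ⟨fun hx => hx.2, fun hx => ⟨⟨x, rfl⟩, hx⟩⟩
      rw [hrr, MonoidHom.comap_ker, hcomp P, QuotientGroup.ker_mk']
    refine Subtype.ext ?_
    rw [← hcomap N, ← hcomap M, h2]
  exact Nat.card_le_card_of_injective θ hinj

end Aux

theorem stmt10 (G H : Type*) [Group G] [Group H] [Group.FG G] [Group.FG H]
    (hGH : ConfigTEquiv G H) (n : ℕ) (hn : 0 < n) :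
    Nat.card {N : Subgroup G // N.Normal ∧ N.index = n} =
      Nat.card {M : Subgroup H // M.Normal ∧ M.index = n} := by
  exact le_antisymm (aux_card_le hGH.1 n hn) (aux_card_le hGH.2 n hn)
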